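/- For every group Γ, every prime p, and every k ≥ 1, cd_{ℤ/p^k}(Γ) = cd_{ℤ/p}(Γ). -/

import Mathlib

open Finset

universe u

/-- The integers as the trivial module over the group ring `ℤΓ`. -/
noncomputable abbrev TrivialZ (Γ : Type) [Group Γ] : Type :=
  (Representation.trivial ℤ (G := Γ) (V := ℤ)).asModule

/-- A group `Γ` is of finite type (type `FP_∞`) if the trivial `ℤΓ`-module `ℤ` admits a
resolution by finitely generated free `ℤΓ`-modules. -/
def HasFiniteType (Γ : Type) [Group Γ] : Prop :=
  ∃ (C : ℕ → Type) (_ : ∀ n, AddCommGroup (C n))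
    (_ : ∀ n, Module (MonoidAlgebra ℤ Γ) (C n)),
    (∀ n, Module.Free (MonoidAlgebra ℤ Γ) (C n)) ∧
    (∀ n, Module.Finite (MonoidAlgebra ℤ Γ) (C n)) ∧
    ∃ (d : ∀ n, C (n + 1) →ₗ[MonoidAlgebra ℤ Γ] C n)
      (ε : C 0 →ₗ[MonoidAlgebra ℤ Γ] TrivialZ Γ),
      Function.Surjective ε ∧
      LinearMap.range (d 0) = LinearMap.ker ε ∧
      ∀ n, LinearMap.range (d (n + 1)) = LinearMap.ker (d n)

/-- A group `Γ` is geometrically finite (type `FL`) if the trivial `ℤΓ`-module `ℤ` admits a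
finite-length resolution by finitely generated free `ℤΓ`-modules. -/
def IsGeomFinite (Γ : Type) [Group Γ] : Prop :=
  ∃ (N : ℕ) (C : ℕ → Type) (_ : ∀ n, AddCommGroup (C n))
    (_ : ∀ n, Module (MonoidAlgebra ℤ Γ) (C n)),
    (∀ n, Module.Free (MonoidAlgebra ℤ Γ) (C n)) ∧
    (∀ n, Module.Finite (MonoidAlgebra ℤ Γ) (C n)) ∧
    (∀ n, N < n → Subsingleton (C n)) ∧
    ∃ (d : ∀ n, C (n + 1) →ₗ[MonoidAlgebra ℤ Γ] C n)
      (ε : C 0 →ₗ[MonoidAlgebra ℤ Γ] TrivialZ Γ),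
      Function.Surjective ε ∧
      LinearMap.range (d 0) = LinearMap.ker ε ∧
      ∀ n, LinearMap.range (d (n + 1)) = LinearMap.ker (d n)

/-- The cohomological dimension of `Γ` over the ring `R`: the supremum (in `ℕ∞`) of
the degrees `n` with `Hⁿ(Γ, M) ≠ 0` for some `RΓ`-module `M`. -/
noncomputable def cohDim (R : Type) [CommRing R] (Γ : Type) [Group Γ] : ℕ∞ :=
  sSup {e : ℕ∞ | ∃ (n : ℕ) (M : Rep R Γ), e = n ∧ Nontrivial (groupCohomology M n)}

section Aux

open groupCohomology CategoryTheory

set_option maxHeartbeats 1000000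

variable {Γ : Type} [Group Γ] {V : Type} [AddCommGroup V]


/-- Restriction of scalars of a representation to `ℤ`. -/
def zRes {R : Type} [CommRing R] {W : Type} [AddCommGroup W] [Module R W]
    (ρ : Representation R Γ W) : Representation ℤ Γ W where
  toFun g := (ρ g).toAddMonoidHom.toIntLinearMap
  map_one' := by ext x; simp
  map_mul' g h := by ext x; simp

@[simp] lemma zRes_apply {R : Type} [CommRing R] {W : Type} [AddCommGroup W] [Module R W]
    (ρ : Representation R Γ W) (g : Γ) (x : W) : zRes ρ g x = ρ g x := rfl

/-- `n`-cochains. -/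
abbrev Cn (Γ V : Type) (n : ℕ) : Type := (Fin n → Γ) → V

/-- The inhomogeneous differential, over `ℤ`. -/
def dd (ρ : Representation ℤ Γ V) (n : ℕ) (f : Cn Γ V n) : Cn Γ V (n + 1) := fun g =>
  ρ (g 0) (f fun i => g i.succ) +
    ∑ j : Fin (n + 1), (-1 : ℤ) ^ ((j : ℕ) + 1) • f (Fin.contractNth j (· * ·) g)

lemma d_eq_dd {R : Type} [CommRing R] (A : Rep R Γ) (n : ℕ) (f : Cn Γ A n) :
    inhomogeneousCochains.d A n f = dd (zRes A.ρ) n f := by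
  funext g
  simp only [inhomogeneousCochains.d_hom_apply, dd, zRes_apply]
  congr 1
  refine Finset.sum_congr rfl fun j _ => ?_
  rw [← Int.cast_smul_eq_zsmul R]
  push_cast
  ring_nf

lemma dd_zRes (ρ : Representation ℤ Γ V) : dd (zRes ρ) = dd ρ := rfl

lemma dd_eq_d (ρ : Representation ℤ Γ V) (n : ℕ) (f : Cn Γ V n) :
    dd ρ n f = inhomogeneousCochains.d (Rep.of ρ) n f := by
  rw [d_eq_dd (Rep.of ρ) n f]
  rfl

lemma dd_add (ρ : Representation ℤ Γ V) (n : ℕ) (f f' : Cn Γ V n) :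
    dd ρ n (f + f') = dd ρ n f + dd ρ n f' := by
  simp only [dd_eq_d]; exact map_add _ f f'

lemma dd_sub (ρ : Representation ℤ Γ V) (n : ℕ) (f f' : Cn Γ V n) :
    dd ρ n (f - f') = dd ρ n f - dd ρ n f' := by
  simp only [dd_eq_d]; exact map_sub _ f f'

lemma dd_dd (ρ : Representation ℤ Γ V) (n : ℕ) (f : Cn Γ V n) :
    dd ρ (n + 1) (dd ρ n f) = 0 := by
  simp only [dd_eq_d]
  have h := (inhomogeneousCochains (Rep.of ρ)).d_comp_d n (n + 1) (n + 2)
  rw [inhomogeneousCochains.d_def, inhomogeneousCochains.d_def] at h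
  have h2 := congrArg (fun φ => φ f) h
  simpa [ModuleCat.hom_comp] using h2

lemma dd_comm {W : Type} [AddCommGroup W] {ρ : Representation ℤ Γ V}
    {σ : Representation ℤ Γ W} (φ : V →+ W) (hφ : ∀ g x, φ (ρ g x) = σ g (φ x))
    (n : ℕ) (f : Cn Γ V n) : dd σ n (φ ∘ f) = φ ∘ dd ρ n f := by
  funext g
  simp [dd, map_sum, hφ]

/-- `f` is a coboundary (in degree `0`: `f = 0`). -/
def IsCob (ρ : Representation ℤ Γ V) : ∀ n : ℕ, Cn Γ V n → Prop
  | 0 => fun f => f = 0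
  | (m + 1) => fun f => ∃ g, dd ρ m g = f

/-- Triviality of `n`-th cohomology, concretely. -/
def TrivH (ρ : Representation ℤ Γ V) (n : ℕ) : Prop :=
  ∀ f : Cn Γ V n, dd ρ n f = 0 → IsCob ρ n f

lemma dd_congr {ρ₁ ρ₂ : Representation ℤ Γ V} (h : ∀ g x, ρ₁ g x = ρ₂ g x) (n : ℕ)
    (f : Cn Γ V n) : dd ρ₁ n f = dd ρ₂ n f := by
  funext g; simp [dd, h]

lemma trivH_congr {ρ₁ ρ₂ : Representation ℤ Γ V} (h : ∀ g x, ρ₁ g x = ρ₂ g x) (n : ℕ) :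
    TrivH ρ₁ n ↔ TrivH ρ₂ n := by
  have hd : ∀ n, dd ρ₁ n = dd ρ₂ n := fun n => funext (dd_congr h n)
  have hc : ∀ n f, IsCob ρ₁ n f ↔ IsCob ρ₂ n f := by
    rintro (_ | m) f
    · exact Iff.rfl
    · simp [IsCob, hd m]
  unfold TrivH
  rw [hd n]
  exact forall₂_congr fun f _ => hc n f

/-- The diagram chase: triviality in a short exact sequence. -/
lemma trivH_of_ses {A B C : Type} [AddCommGroup A] [AddCommGroup B] [AddCommGroup C]
    {ρA : Representation ℤ Γ A} {ρB : Representation ℤ Γ B} {ρC : Representation ℤ Γ C}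
    (φ : A →+ B) (ψ : B →+ C)
    (hφρ : ∀ g x, φ (ρA g x) = ρB g (φ x)) (hψρ : ∀ g x, ψ (ρB g x) = ρC g (ψ x))
    (hφ : Function.Injective φ) (hker : ∀ b, ψ b = 0 → ∃ a, φ a = b) (hψ : Function.Surjective ψ)
    (n : ℕ) (hA : TrivH ρA n) (hC : TrivH ρC n) : TrivH ρB n := by
  intro b hb
  have hc : dd ρC n (ψ ∘ b) = 0 := by
    rw [dd_comm ψ hψρ n b, hb]
    funext g; simp
  have hcob := hC (ψ ∘ b) hc
  cases n with
  | zero =>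
    -- ψ ∘ b = 0, so b lifts to a, and a is a cocycle, hence 0
    have hlift : ∀ x, ∃ a, φ a = b x := fun x => hker (b x) (congrFun hcob x)
    choose a ha using hlift
    have hda : φ ∘ dd ρA 0 a = dd ρB 0 b := by
      rw [← dd_comm φ hφρ 0 a]
      exact congrArg (dd ρB 0) (funext ha)
    have : dd ρA 0 a = 0 := by
      apply funext; intro g
      apply hφ
      have := congrFun hda g
      rw [hb] at this
      simpa using this
    have ha0 : a = 0 := hA a this
    funext x
    rw [← ha x, ha0]
    simp
  | succ m =>
    obtain ⟨c', hc'⟩ := hcob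
    choose b' hb' using fun x => hψ (c' x)
    have hbb : ψ ∘ (b - dd ρB m b') = 0 := by
      funext x
      have h1 : ψ ∘ dd ρB m b' = dd ρC m c' := by
        rw [← dd_comm ψ hψρ m b']
        exact congrArg (dd ρC m) (funext hb')
      simp only [Function.comp_apply, Pi.sub_apply, map_sub]
      have := congrFun h1 x
      simp only [Function.comp_apply] at this
      rw [this, hc']
      simp
    have hlift : ∀ x, ∃ a, φ a = (b - dd ρB m b') x := fun x => hker _ (congrFun hbb x)
    choose a ha using hlift
    have haf : φ ∘ a = b - dd ρB m b' := funext ha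
    have hda : dd ρA (m + 1) a = 0 := by
      apply funext; intro g
      apply hφ
      have h2 : φ ∘ dd ρA (m + 1) a = dd ρB (m + 1) (b - dd ρB m b') := by
        rw [← dd_comm φ hφρ (m + 1) a, haf]
      have := congrFun h2 g
      simp only [Function.comp_apply] at this
      rw [dd_sub, hb, dd_dd] at this
      simpa using this
    obtain ⟨a', ha'⟩ := hA a hda
    refine ⟨b' + φ ∘ a', ?_⟩
    have : dd ρB m (φ ∘ a') = φ ∘ a := by
      rw [dd_comm φ hφρ m a', ha']
    calc dd ρB m (b' + φ ∘ a') = dd ρB m b' + dd ρB m (φ ∘ a') := dd_add ..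
      _ = dd ρB m b' + (b - dd ρB m b') := by rw [this, haf]
      _ = b := by abel

lemma moduleCat_subsingleton_iff_isZero {R : Type} [CommRing R] (X : ModuleCat R) :
    Subsingleton X ↔ Limits.IsZero X := by
  constructor
  · intro h; exact ModuleCat.isZero_of_subsingleton X
  · intro h
    have h0 : (𝟙 X : X ⟶ X) = 0 := h.eq_of_src _ _
    refine ⟨fun a b => ?_⟩
    calc a = (𝟙 X : X ⟶ X) a := rfl
      _ = (0 : X ⟶ X) a := by rw [h0]
      _ = (0 : X ⟶ X) b := rfl
      _ = (𝟙 X : X ⟶ X) b := by rw [h0]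
      _ = b := rfl

lemma groupCohomology_subsingleton_iff {R : Type} [CommRing R] (A : Rep R Γ) (n : ℕ) :
    Subsingleton (groupCohomology A n) ↔ TrivH (zRes A.ρ) n := by
  rw [show Subsingleton (groupCohomology A n) ↔
      Limits.IsZero ((inhomogeneousCochains A).homology n) from
    moduleCat_subsingleton_iff_isZero _]
  rw [← HomologicalComplex.exactAt_iff_isZero_homology]
  cases n with
  | zero =>
    rw [HomologicalComplex.exactAt_iff' (inhomogeneousCochains A) 0 0 1
      (CochainComplex.prev_nat_zero) (CochainComplex.next _ 0),
      ShortComplex.moduleCat_exact_iff]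
    simp only [HomologicalComplex.shortComplexFunctor'_obj_f,
      HomologicalComplex.shortComplexFunctor'_obj_g, HomologicalComplex.sc']
    have hd00 : (inhomogeneousCochains A).d 0 0 = 0 :=
      HomologicalComplex.shape _ 0 0 (by simp [ComplexShape.up])
    simp only [CochainComplex.of_d, CochainComplex.of_d_ne _ _ (show 0 + 1 ≠ 0 by simp), ModuleCat.hom_zero, LinearMap.zero_apply]
    constructor
    · intro h f hf
      obtain ⟨y, hy⟩ := h f ((d_eq_dd A 0 f).trans hf)
      exact hy.symm.trans rfl
    · intro h f hf
      refine ⟨f, ?_⟩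
      have : f = 0 := h f ((d_eq_dd A 0 f).symm.trans hf)
      rw [this]; rfl
  | succ m =>
    rw [HomologicalComplex.exactAt_iff' (inhomogeneousCochains A) m (m + 1) (m + 1 + 1)
      (CochainComplex.prev_nat_succ m) (CochainComplex.next _ (m + 1)),
      ShortComplex.moduleCat_exact_iff]
    simp only [HomologicalComplex.shortComplexFunctor'_obj_f,
      HomologicalComplex.shortComplexFunctor'_obj_g, HomologicalComplex.sc']
    simp only [CochainComplex.of_d]
    constructor
    · intro h f hf
      obtain ⟨y, hy⟩ := h f ((d_eq_dd A (m + 1) f).trans hf)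
      exact ⟨y, (d_eq_dd A m y).symm.trans hy⟩
    · intro h f hf
      obtain ⟨y, hy⟩ := h f ((d_eq_dd A (m + 1) f).symm.trans hf)
      exact ⟨y, (d_eq_dd A m y).trans hy⟩

section Torsion

variable (ρ : Representation ℤ Γ V)

/-- The subrepresentation on an invariant submodule. -/
def subRep (W : Submodule ℤ V) (hW : ∀ g, ∀ x ∈ W, ρ g x ∈ W) : Representation ℤ Γ W where
  toFun g := (ρ g).restrict (hW g)
  map_one' := by ext x; simp [LinearMap.restrict_apply]
  map_mul' g h := by ext x; simp [LinearMap.restrict_apply]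

/-- The quotient representation by an invariant submodule. -/
def quotRep (W : Submodule ℤ V) (hW : ∀ g, ∀ x ∈ W, ρ g x ∈ W) :
    Representation ℤ Γ (V ⧸ W) where
  toFun g := W.mapQ W (ρ g) (fun x hx => hW g x hx)
  map_one' := by
    apply Submodule.linearMap_qext
    ext x
    simp
  map_mul' g h := by
    apply Submodule.linearMap_qext
    ext x
    simp

lemma trivH_of_torsion (p : ℕ) (n : ℕ)
    (H : ∀ (W : Type) (_ : AddCommGroup W) (σ : Representation ℤ Γ W),
      (∀ x : W, (p : ℤ) • x = 0) → TrivH σ n) :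
    ∀ (i : ℕ) (V : Type) (_ : AddCommGroup V) (ρ : Representation ℤ Γ V),
      (∀ x : V, (p : ℤ) ^ i • x = 0) → TrivH ρ n := by
  intro i
  induction i with
  | zero =>
    intro V _ ρ h
    have hzero : ∀ x : V, x = 0 := fun x => by simpa using h x
    intro f _
    cases n with
    | zero => funext g; exact hzero _
    | succ m => exact ⟨0, funext fun g => (hzero _).trans (hzero _).symm⟩
  | succ i ih =>
    intro V _ ρ h
    set W : Submodule ℤ V := LinearMap.range ((p : ℤ) • (LinearMap.id : V →ₗ[ℤ] V)) with hWdef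
    have hmem : ∀ x : V, (p : ℤ) • x ∈ W := fun x => ⟨x, by simp⟩
    have hW : ∀ g, ∀ x ∈ W, ρ g x ∈ W := by
      rintro g x ⟨y, rfl⟩
      refine ⟨ρ g y, ?_⟩
      simp [map_smul]
    have hWtor : ∀ x : W, (p : ℤ) ^ i • x = 0 := by
      rintro ⟨x, y, hy⟩
      have hx : (p : ℤ) • y = x := by simpa using hy
      apply Subtype.ext
      show (p : ℤ) ^ i • (x : V) = (0 : V)
      rw [← hx, smul_smul, ← pow_succ, h y]
    have hQtor : ∀ c : V ⧸ W, (p : ℤ) • c = 0 := by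
      intro c
      obtain ⟨x, rfl⟩ := Submodule.mkQ_surjective W c
      rw [show W.mkQ x = Submodule.Quotient.mk x from rfl, ← Submodule.Quotient.mk_smul,
        Submodule.Quotient.mk_eq_zero]
      exact hmem x
    have hsub : TrivH (subRep ρ W hW) n := ih W _ (subRep ρ W hW) hWtor
    have hquot : TrivH (quotRep ρ W hW) n := H _ _ (quotRep ρ W hW) hQtor
    refine trivH_of_ses (ρA := subRep ρ W hW) (ρB := ρ) (ρC := quotRep ρ W hW)
      W.subtype.toAddMonoidHom W.mkQ.toAddMonoidHom ?_ ?_ ?_ ?_ ?_ n hsub hquot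
    · intro g x; rfl
    · intro g x
      show W.mkQ (ρ g x) = (quotRep ρ W hW) g (W.mkQ x)
      simp [quotRep, Submodule.mapQ_apply, Submodule.mkQ_apply]
    · exact Subtype.coe_injective
    · intro b hb
      have hbW : b ∈ W := (Submodule.Quotient.mk_eq_zero _).mp hb
      exact ⟨⟨b, hbW⟩, rfl⟩
    · exact Submodule.mkQ_surjective W

end Torsion

lemma tor' (N : ℕ) (h : ∀ x : V, (N : ℤ) • x = 0) : ∀ x : V, N • x = 0 := fun x => by
  rw [← natCast_zsmul]; exact h x

/-- The `ZMod N`-module structure on an `N`-torsion abelian group. -/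
def modOf (N : ℕ) [NeZero N] (h : ∀ x : V, (N : ℤ) • x = 0) : Module (ZMod N) V :=
  AddCommGroup.zmodModule (tor' N h)

/-- An `N`-torsion `ℤ`-representation as a `ZMod N`-representation. -/
def zrepMod (N : ℕ) [NeZero N] (ρ : Representation ℤ Γ V) (h : ∀ x : V, (N : ℤ) • x = 0) :
    @Representation (ZMod N) Γ V _ _ _ (modOf N h) :=
  letI : Module (ZMod N) V := modOf N h
  { toFun := fun g => (ρ g).toAddMonoidHom.toZModLinearMap N
    map_one' := by ext x; simp
    map_mul' := fun g g' => by ext x; simp }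

/-- Package an `N`-torsion `ℤ`-representation as an object of `Rep (ZMod N) Γ`. -/
noncomputable def repMod (N : ℕ) [NeZero N] (ρ : Representation ℤ Γ V)
    (h : ∀ x : V, (N : ℤ) • x = 0) : Rep (ZMod N) Γ :=
  letI : Module (ZMod N) V := modOf N h
  Rep.of (zrepMod N ρ h)

lemma repMod_subsingleton_iff (N : ℕ) [NeZero N] (ρ : Representation ℤ Γ V)
    (h : ∀ x : V, (N : ℤ) • x = 0) (n : ℕ) :
    Subsingleton (groupCohomology (repMod N ρ h) n) ↔ TrivH ρ n := by
  rw [groupCohomology_subsingleton_iff]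
  exact trivH_congr (fun g x => rfl) n

lemma repTorsion (N : ℕ) [NeZero N] (M : Rep (ZMod N) Γ) (x : M) : (N : ℤ) • x = 0 := by
  calc (N : ℤ) • x = (((N : ℤ) : ZMod N)) • x := (Int.cast_smul_eq_zsmul _ _ _).symm
    _ = ((N : ZMod N)) • x := by norm_cast
    _ = 0 := by rw [ZMod.natCast_self, zero_smul]

theorem stmt18' (Γ : Type) [Group Γ] (p : ℕ) (hp : p.Prime) (k : ℕ) (hk : 1 ≤ k) :
    (sSup {e : ℕ∞ | ∃ (n : ℕ) (M : Rep (ZMod (p ^ k)) Γ), e = n ∧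
        Nontrivial (groupCohomology M n)} : ℕ∞) =
      sSup {e : ℕ∞ | ∃ (n : ℕ) (M : Rep (ZMod p) Γ), e = n ∧
        Nontrivial (groupCohomology M n)} := by
  haveI : NeZero p := ⟨hp.ne_zero⟩
  haveI : NeZero (p ^ k) := ⟨pow_ne_zero k hp.ne_zero⟩
  obtain ⟨k', rfl⟩ : ∃ k', k = k' + 1 := ⟨k - 1, (Nat.succ_pred_eq_of_pos hk).symm⟩
  apply le_antisymm
  · refine sSup_le ?_
    rintro e ⟨n, M, rfl, hM⟩
    by_cases hex : ∃ N : Rep (ZMod p) Γ, Nontrivial (groupCohomology N n)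
    · obtain ⟨N, hN⟩ := hex
      exact le_sSup ⟨n, N, rfl, hN⟩
    · exfalso
      push_neg at hex
      have hH : ∀ (W : Type) (_ : AddCommGroup W) (σ : Representation ℤ Γ W),
          (∀ x : W, (p : ℤ) • x = 0) → TrivH σ n := by
        intro W _ σ hσ
        have h1 : Subsingleton (groupCohomology (repMod p σ hσ) n) :=
          hex _
        exact (repMod_subsingleton_iff p σ hσ n).mp h1
      have hMtor : ∀ x : M, (p : ℤ) ^ (k' + 1) • x = 0 := fun x => by
        have h2 := repTorsion (p ^ (k' + 1)) M x
        rwa [show ((p ^ (k' + 1) : ℕ) : ℤ) = (p : ℤ) ^ (k' + 1) by push_cast; ring] at h2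
      have hT : TrivH (zRes M.ρ) n :=
        trivH_of_torsion p n hH (k' + 1) _ _ (zRes M.ρ) hMtor
      have h2 : Subsingleton (groupCohomology M n) :=
        (groupCohomology_subsingleton_iff M n).mpr hT
      exact (not_subsingleton_iff_nontrivial.mpr hM) h2
  · refine sSup_le ?_
    rintro e ⟨n, N, rfl, hN⟩
    have hNtor : ∀ x : N, (p : ℤ) • x = 0 := repTorsion p N
    have hNtork : ∀ x : N, ((p ^ (k' + 1) : ℕ) : ℤ) • x = 0 := fun x => by
      rw [show ((p ^ (k' + 1) : ℕ) : ℤ) = (p : ℤ) ^ k' * (p : ℤ) by push_cast; ring,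
        mul_smul, hNtor x, smul_zero]
    have hnon : Nontrivial (groupCohomology (repMod (p ^ (k' + 1)) (zRes N.ρ) hNtork) n) := by
      rw [← not_subsingleton_iff_nontrivial]
      intro hT
      have hT2 : TrivH (zRes N.ρ) n :=
        (repMod_subsingleton_iff (p ^ (k' + 1)) (zRes N.ρ) hNtork n).mp hT
      exact (not_subsingleton_iff_nontrivial.mpr hN)
        ((groupCohomology_subsingleton_iff N n).mpr hT2)
    exact le_sSup ⟨n, repMod (p ^ (k' + 1)) (zRes N.ρ) hNtork, rfl, hnon⟩

end Aux

/-- For every group `Γ`, every prime `p` and every `k ≥ 1`,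
`cd_{ℤ/p^k}(Γ) = cd_{ℤ/p}(Γ)`. -/
theorem stmt18 (Γ : Type) [Group Γ] (p : ℕ) (hp : p.Prime) (k : ℕ) (hk : 1 ≤ k) :
    cohDim (ZMod (p ^ k)) Γ = cohDim (ZMod p) Γ := by
  unfold cohDim
  exact stmt18' Γ p hp k hk
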